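/- (Appendix, second part: derivability of the intended stage relations.) With G and I as defined (G the semantic stage-axiom operator on quintuples of relations on α, I the intended quintuple of stage-ordering relations): every element of I is contained in the least fixed point of G. Together with G(I) = I this yields lfp G = I. Concretely: for every pair (a,b) and every component X ∈ {≺, ⪯, ⊀, ⋠, ◁}, if (a,b) ∈ I_X then (a,b) belongs to the X-component of ⨆-iteration of G from the empty quintuple (the proof is by strong induction on stage(b)). -/
import Mathlib


/- The stage of an atom `a` under the staged fixed-point computation
(Algorithm 2): the least `l` with `a ∈ F^[l] ∅` if `a` belongs to the
fixed point `F^[f] ∅`, and `f + 1` otherwise. -/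
open Classical in
noncomputable def stage {α : Type*} (F : Set α → Set α) (f : ℕ) (a : α) : ℕ :=
  if a ∈ F^[f] (∅ : Set α) then sInf {l : ℕ | a ∈ F^[l] (∅ : Set α)} else f + 1

/- A quintuple of binary relations on `α`, in the order
(≺ strictly-before, ⪯ before, ⊀ not-strictly-before, ⋠ not-before,
◁ immediately-before). -/
abbrev Quint (α : Type*) :=
  Set (α × α) × Set (α × α) × Set (α × α) × Set (α × α) × Set (α × α)

namespace Quint

variable {α : Type*}

def lt (R : Quint α) : Set (α × α) := R.1
def le (R : Quint α) : Set (α × α) := R.2.1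
def nlt (R : Quint α) : Set (α × α) := R.2.2.1
def nle (R : Quint α) : Set (α × α) := R.2.2.2.1
def imm (R : Quint α) : Set (α × α) := R.2.2.2.2

end Quint

/- The semantic stage-axiom operator (equations (1)–(5) of the paper). -/
def G {α : Type*} (F : Set α → Set α) (R : Quint α) : Quint α :=
  ({p : α × α | ∃ c : α, (p.1, c) ∈ R.le ∧ (c, p.2) ∈ R.imm},
   {p : α × α | p.1 ∈ F {c : α | (c, p.2) ∈ R.lt}},
   {p : α × α | p.2 ∈ F ∅ ∨
      (∃ c : α, (p.1, c) ∈ R.nle ∧ (c, p.2) ∈ R.imm) ∨ F ∅ = ∅},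
   {p : α × α | p.1 ∉ F {c : α | (c, p.2) ∉ R.nlt}},
   {p : α × α | p.1 ∈ F {c : α | (c, p.1) ∈ R.lt} ∧
      p.2 ∉ F {c : α | (c, p.1) ∉ R.nlt} ∧
      (p.2 ∈ F {c : α | (c, p.1) ∈ R.le} ∨
        ∀ c : α, c ∈ F {c' : α | (c', p.1) ∉ R.nle} →
          c ∈ F {c' : α | (c', p.1) ∈ R.lt})})

/- The intended quintuple of stage-ordering relations. -/
noncomputable def I {α : Type*} (F : Set α → Set α) (f : ℕ) : Quint α :=
  ({p : α × α | stage F f p.1 < stage F f p.2},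
   {p : α × α | stage F f p.1 ≤ stage F f p.2 ∧ stage F f p.1 ≤ f},
   {p : α × α | stage F f p.1 ≥ stage F f p.2},
   {p : α × α | stage F f p.1 > stage F f p.2 ∨ stage F f p.1 = f + 1},
   {p : α × α | stage F f p.1 + 1 = stage F f p.2})

section Aux
variable {α : Type*} {F : Set α → Set α} {f : ℕ}

lemma S_mono (hF : Monotone F) : Monotone (fun l => F^[l] (∅ : Set α)) := by
  apply monotone_nat_of_le_succ
  intro n
  induction n with
  | zero => simp
  | succ n ih =>
      rw [Function.iterate_succ_apply', Function.iterate_succ_apply']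
      exact hF ih

lemma S_stab (hf : F^[f + 1] (∅ : Set α) = F^[f] ∅) :
    ∀ l, f ≤ l → F^[l] (∅ : Set α) = F^[f] ∅ := by
  intro l hl
  induction l, hl using Nat.le_induction with
  | base => rfl
  | succ l hl ih =>
      rw [Function.iterate_succ_apply', ih]
      have h2 := hf
      rw [Function.iterate_succ_apply'] at h2
      exact h2

lemma memS (hF : Monotone F) (hf : F^[f + 1] (∅ : Set α) = F^[f] ∅) (a : α) (l : ℕ) :
    a ∈ F^[l] (∅ : Set α) ↔ stage F f a ≤ l ∧ stage F f a ≤ f := by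
  by_cases h : a ∈ F^[f] (∅ : Set α)
  · have hne : {l : ℕ | a ∈ F^[l] (∅ : Set α)}.Nonempty := ⟨f, h⟩
    have hs : stage F f a = sInf {l : ℕ | a ∈ F^[l] (∅ : Set α)} := by
      simp [stage, h]
    constructor
    · intro hl
      exact ⟨hs ▸ Nat.sInf_le hl, hs ▸ Nat.sInf_le h⟩
    · intro ⟨h1, _⟩
      have := Nat.sInf_mem hne
      exact S_mono hF (hs ▸ h1) this
  · have hs : stage F f a = f + 1 := by simp [stage, h]
    constructor
    · intro hl
      exfalso
      rcases le_or_gt l f with h' | h'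
      · exact h (S_mono hF h' hl)
      · rw [S_stab hf l h'.le] at hl; exact h hl
    · intro ⟨_, h2⟩; omega

lemma stage_pos (a : α) : 1 ≤ stage F f a := by
  unfold stage
  split
  · rcases Nat.eq_zero_or_pos (sInf {l : ℕ | a ∈ F^[l] (∅ : Set α)}) with h | h
    · exfalso
      have := Nat.sInf_mem (⟨f, by assumption⟩ : {l : ℕ | a ∈ F^[l] (∅ : Set α)}.Nonempty)
      rw [h] at this
      simp only [Set.mem_setOf_eq, Function.iterate_zero_apply] at this
      exact this
    · exact h
  · omega

lemma stage_le_f1 (a : α) : stage F f a ≤ f + 1 := by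
  unfold stage
  split
  · exact (Nat.sInf_le (by assumption)).trans (by omega)
  · omega

lemma mem_stage (hF : Monotone F) (hf : F^[f + 1] (∅ : Set α) = F^[f] ∅) (a : α)
    (h : stage F f a ≤ f) : a ∈ F^[stage F f a] (∅ : Set α) :=
  (memS hF hf a _).2 ⟨le_rfl, h⟩

lemma exists_stage (hF : Monotone F) (hf : F^[f + 1] (∅ : Set α) = F^[f] ∅)
    (hfmin : ∀ j : ℕ, F^[j + 1] ∅ = F^[j] ∅ → f ≤ j)
    (m : ℕ) (h1 : 1 ≤ m) (h2 : m ≤ f) : ∃ c : α, stage F f c = m := by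
  have hne : F^[m] (∅ : Set α) ≠ F^[m - 1] ∅ := by
    intro h
    have : f ≤ m - 1 := hfmin (m - 1) (by rw [Nat.sub_add_cancel h1]; exact h)
    omega
  have hsub : F^[m - 1] (∅ : Set α) ⊆ F^[m] ∅ := S_mono hF (by omega)
  obtain ⟨c, hc1, hc2⟩ : ∃ c, c ∈ F^[m] (∅ : Set α) ∧ c ∉ F^[m - 1] ∅ := by
    by_contra h
    push_neg at h
    exact hne (Set.Subset.antisymm (fun x hx => h x hx) hsub)
  refine ⟨c, ?_⟩
  have h1' := (memS hF hf c m).1 hc1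
  have h2' : ¬(stage F f c ≤ m - 1 ∧ stage F f c ≤ f) := fun h => hc2 ((memS hF hf c _).2 h)
  omega

end Aux

section Fix
variable {α : Type*}

lemma G_mono (F : Set α → Set α) (hF : Monotone F) : Monotone (G F) := by
  intro R R' h
  have h1 : R.lt ⊆ R'.lt := h.1
  have h2 : R.le ⊆ R'.le := h.2.1
  have h3 : R.nlt ⊆ R'.nlt := h.2.2.1
  have h4 : R.nle ⊆ R'.nle := h.2.2.2.1
  have h5 : R.imm ⊆ R'.imm := h.2.2.2.2
  refine ⟨?_, ?_, ?_, ?_, ?_⟩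
  · intro p hp
    obtain ⟨c, hc1, hc2⟩ := hp
    exact ⟨c, h2 hc1, h5 hc2⟩
  · intro p hp
    exact hF (fun c hc => h1 hc) hp
  · intro p hp
    rcases hp with hp | ⟨c, hc1, hc2⟩ | hp
    · exact Or.inl hp
    · exact Or.inr (Or.inl ⟨c, h4 hc1, h5 hc2⟩)
    · exact Or.inr (Or.inr hp)
  · intro p hp hmem
    refine hp (hF ?_ hmem)
    intro c hc h'
    exact hc (h3 h')
  · intro p hp
    obtain ⟨hp1, hp2, hp3⟩ := hp
    have hsub : {c : α | (c, p.1) ∉ R'.nlt} ⊆ {c : α | (c, p.1) ∉ R.nlt} :=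
      fun c hc h' => hc (h3 h')
    refine ⟨hF (fun c hc => h1 hc) hp1, fun hmem => hp2 (hF hsub hmem), ?_⟩
    rcases hp3 with hp3 | hp3
    · exact Or.inl (hF (fun c hc => h2 hc) hp3)
    · refine Or.inr fun c hc => ?_
      have hsub2 : {c' : α | (c', p.1) ∉ R'.nle} ⊆ {c' : α | (c', p.1) ∉ R.nle} :=
        fun c' hc' h' => hc' (h4 h')
      exact hF (fun c' hc' => h1 hc') (hp3 c (hF hsub2 hc))

lemma exists_fix [Fintype α] (F : Set α → Set α) (hF : Monotone F) :
    G F (⨆ n : ℕ, (G F)^[n] (⊥ : Quint α)) = ⨆ n : ℕ, (G F)^[n] (⊥ : Quint α) := by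
  set J : ℕ → Quint α := fun n => (G F)^[n] ⊥ with hJ
  have hchain : ∀ n, J n ≤ J (n + 1) := by
    intro n
    induction n with
    | zero => exact bot_le
    | succ n ih =>
        have : J (n + 1) = G F (J n) := Function.iterate_succ_apply' _ _ _
        have h2 : J (n + 2) = G F (J (n + 1)) := Function.iterate_succ_apply' _ _ _
        rw [this, h2]
        exact G_mono F hF ih
  have hmono : Monotone J := monotone_nat_of_le_succ hchain
  obtain ⟨N, hN⟩ : ∃ N, J (N + 1) = J N := by
    by_contra h
    push_neg at h
    have hs : StrictMono J :=
      strictMono_nat_of_lt_succ fun n => lt_of_le_of_ne (hchain n) (Ne.symm (h n))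
    obtain ⟨x, y, hxy, hfeq⟩ := Finite.exists_ne_map_eq_of_infinite J
    exact hxy (hs.injective hfeq)
  have hconst : ∀ m, J (N + m) = J N := by
    intro m
    induction m with
    | zero => rfl
    | succ m ih =>
        have : J (N + m + 1) = G F (J (N + m)) := Function.iterate_succ_apply' _ _ _
        have h2 : J (N + 1) = G F (J N) := Function.iterate_succ_apply' _ _ _
        rw [show N + (m + 1) = N + m + 1 by omega, this, ih, ← h2, hN]
  have hU : (⨆ n : ℕ, J n) = J N := by
    apply le_antisymm
    · apply iSup_le
      intro n
      rcases le_or_gt n N with h | h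
      · exact hmono h
      · rw [show n = N + (n - N) by omega, hconst (n - N)]
    · exact le_iSup J N
  rw [hU]
  have h2 : J (N + 1) = G F (J N) := Function.iterate_succ_apply' _ _ _
  rw [← h2, hN]

end Fix

lemma main_induction {α : Type*} (F : Set α → Set α) (hF : Monotone F) (f : ℕ)
    (hf : F^[f + 1] ∅ = F^[f] ∅) (hfmin : ∀ j : ℕ, F^[j + 1] ∅ = F^[j] ∅ → f ≤ j)
    (U : Quint α) (hfix : G F U = U) :
    ∀ k : ℕ, ∀ a b : α, stage F f b = k →
      (stage F f a < k → (a, b) ∈ U.lt) ∧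
      (stage F f a ≤ k ∧ stage F f a ≤ f → (a, b) ∈ U.le) ∧
      (stage F f a ≥ k → (a, b) ∈ U.nlt) ∧
      ((stage F f a > k ∨ stage F f a = f + 1) → (a, b) ∈ U.nle) ∧
      (stage F f a + 1 = k → (a, b) ∈ U.imm) := by
  intro k
  induction k using Nat.strong_induction_on with
  | _ k IH =>
  intro a0 b hb
  have hk1 : 1 ≤ k := hb ▸ stage_pos b
  have hkf : k ≤ f + 1 := hb ▸ stage_le_f1 b
  -- immediate-before at level k
  have Himm : ∀ c : α, stage F f c + 1 = k → (c, b) ∈ U.imm := by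
    intro c hc
    have hc1 : 1 ≤ stage F f c := stage_pos c
    have hcf : stage F f c ≤ f := by omega
    have hclt : stage F f c < k := by omega
    have IHc := fun (x : α) => IH (stage F f c) hclt x c rfl
    rw [← hfix]
    refine ⟨?_, ?_, ?_⟩
    · -- c ∈ F {c' | (c', c) ∈ U.lt}
      obtain ⟨m, hm⟩ : ∃ m, stage F f c = m + 1 := ⟨stage F f c - 1, by omega⟩
      have hmem : c ∈ F^[stage F f c] (∅ : Set α) := mem_stage hF hf c hcf
      rw [hm, Function.iterate_succ_apply'] at hmem
      refine hF ?_ hmem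
      intro c' hc'
      have h' := (memS hF hf c' m).1 hc'
      exact (IHc c').1 (by omega)
    · -- b ∉ F {c' | (c', c) ∉ U.nlt}
      intro hmem
      have hsub : {c' : α | (c', c) ∉ U.nlt} ⊆ F^[stage F f c - 1] (∅ : Set α) := by
        intro c' hc'
        have hlt : stage F f c' < stage F f c := by
          by_contra h
          exact hc' ((IHc c').2.2.1 (by omega))
        exact (memS hF hf c' _).2 ⟨by omega, by omega⟩
      have hb2 : b ∈ F^[(stage F f c - 1) + 1] (∅ : Set α) := by
        rw [Function.iterate_succ_apply']
        exact hF hsub hmem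
      have h' := (memS hF hf b _).1 hb2
      omega
    · by_cases hbf : k ≤ f
      · left
        have hmem : b ∈ F^[stage F f b] (∅ : Set α) := mem_stage hF hf b (by omega)
        rw [hb, ← hc, Function.iterate_succ_apply'] at hmem
        refine hF ?_ hmem
        intro c' hc'
        have h' := (memS hF hf c' _).1 hc'
        exact (IHc c').2.1 ⟨h'.1, h'.2⟩
      · right
        intro c'' hc''
        have hscf : stage F f c = f := by omega
        have hsub : {c' : α | (c', c) ∉ U.nle} ⊆ F^[f] (∅ : Set α) := by
          intro c' h'
          have h1 : ¬(stage F f c' > stage F f c ∨ stage F f c' = f + 1) := by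
            intro h2
            exact h' ((IHc c').2.2.2.1 (by omega))
          push_neg at h1
          have hle := stage_le_f1 (F := F) (f := f) c'
          exact (memS hF hf c' f).2 ⟨by omega, by omega⟩
        have hc2 : c'' ∈ F^[f + 1] (∅ : Set α) := by
          rw [Function.iterate_succ_apply']
          exact hF hsub hc''
        rw [hf] at hc2
        have hf1 : 1 ≤ f := by omega
        obtain ⟨m, hm⟩ : ∃ m, f = m + 1 := ⟨f - 1, by omega⟩
        rw [hm, Function.iterate_succ_apply'] at hc2
        refine hF ?_ hc2
        intro c' h'
        have h2 := (memS hF hf c' m).1 h'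
        exact (IHc c').1 (by omega)
  -- strictly-before at level k
  have Hlt : ∀ a : α, stage F f a < k → (a, b) ∈ U.lt := by
    intro a ha
    have ha1 := stage_pos (F := F) (f := f) a
    obtain ⟨c, hcs⟩ := exists_stage hF hf hfmin (k - 1) (by omega) (by omega)
    rw [← hfix]
    refine ⟨c, ?_, ?_⟩
    · exact (IH (k - 1) (by omega) a c hcs).2.1 ⟨by omega, by omega⟩
    · exact Himm c (by omega)
  -- not-strictly-before at level k
  have Hnlt : ∀ a : α, stage F f a ≥ k → (a, b) ∈ U.nlt := by
    intro a ha
    have haf := stage_le_f1 (F := F) (f := f) a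
    rw [← hfix]
    rcases Nat.lt_or_ge k 2 with hk2 | hk2
    · by_cases h0 : F (∅ : Set α) = ∅
      · exact Or.inr (Or.inr h0)
      · left
        have hf1 : 1 ≤ f := by
          by_contra h
          have hf0 : f = 0 := by omega
          apply h0
          have h2 := hf
          rw [hf0] at h2
          simpa using h2
        have hb1 : b ∈ F^[1] (∅ : Set α) := (memS hF hf b 1).2 ⟨by omega, by omega⟩
        simpa using hb1
    · refine Or.inr (Or.inl ?_)
      obtain ⟨c, hcs⟩ := exists_stage hF hf hfmin (k - 1) (by omega) (by omega)
      refine ⟨c, ?_, Himm c (by omega)⟩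
      exact (IH (k - 1) (by omega) a c hcs).2.2.2.1 (Or.inl (by omega))
  -- before at level k
  have Hle : ∀ a : α, stage F f a ≤ k ∧ stage F f a ≤ f → (a, b) ∈ U.le := by
    intro a ⟨h1, h2⟩
    rw [← hfix]
    have ha1 := stage_pos (F := F) (f := f) a
    have hmem : a ∈ F^[stage F f a] (∅ : Set α) := mem_stage hF hf a h2
    obtain ⟨m, hm⟩ : ∃ m, stage F f a = m + 1 := ⟨stage F f a - 1, by omega⟩
    rw [hm, Function.iterate_succ_apply'] at hmem
    refine hF ?_ hmem
    intro c hc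
    have h' := (memS hF hf c m).1 hc
    exact Hlt c (by omega)
  -- not-before at level k
  have Hnle : ∀ a : α, (stage F f a > k ∨ stage F f a = f + 1) → (a, b) ∈ U.nle := by
    intro a ha
    rw [← hfix]
    intro hmem
    have hsub : {c : α | (c, b) ∉ U.nlt} ⊆ F^[k - 1] (∅ : Set α) := by
      intro c hc
      have hlt : stage F f c < k := by
        by_contra h
        exact hc (Hnlt c (by omega))
      exact (memS hF hf c _).2 ⟨by omega, by omega⟩
    have ha2 : a ∈ F^[(k - 1) + 1] (∅ : Set α) := by
      rw [Function.iterate_succ_apply']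
      exact hF hsub hmem
    have h2 := (memS hF hf a _).1 ha2
    omega
  exact ⟨Hlt a0, Hle a0, Hnlt a0, Hnle a0, Himm a0⟩

theorem intended_relations_derivable
    {α : Type*} [Fintype α] (F : Set α → Set α) (hF : Monotone F)
    (f : ℕ) (hf : F^[f + 1] ∅ = F^[f] ∅)
    (hfmin : ∀ j : ℕ, F^[j + 1] ∅ = F^[j] ∅ → f ≤ j) :
    (∀ a b : α, stage F f a < stage F f b →
        (a, b) ∈ (⨆ n : ℕ, (G F)^[n] (⊥ : Quint α)).lt) ∧
    (∀ a b : α, stage F f a ≤ stage F f b ∧ stage F f a ≤ f →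
        (a, b) ∈ (⨆ n : ℕ, (G F)^[n] (⊥ : Quint α)).le) ∧
    (∀ a b : α, stage F f a ≥ stage F f b →
        (a, b) ∈ (⨆ n : ℕ, (G F)^[n] (⊥ : Quint α)).nlt) ∧
    (∀ a b : α, (stage F f a > stage F f b ∨ stage F f a = f + 1) →
        (a, b) ∈ (⨆ n : ℕ, (G F)^[n] (⊥ : Quint α)).nle) ∧
    (∀ a b : α, stage F f a + 1 = stage F f b →
        (a, b) ∈ (⨆ n : ℕ, (G F)^[n] (⊥ : Quint α)).imm) := by
  have hfix := exists_fix F hF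
  have main := main_induction F hF f hf hfmin _ hfix
  exact ⟨fun a b h => (main (stage F f b) a b rfl).1 h,
         fun a b h => (main (stage F f b) a b rfl).2.1 h,
         fun a b h => (main (stage F f b) a b rfl).2.2.1 h,
         fun a b h => (main (stage F f b) a b rfl).2.2.2.1 h,
         fun a b h => (main (stage F f b) a b rfl).2.2.2.2 h⟩
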